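/- For the torsion-free connection ∇ = ∇^{CP} on sl(2n+1,ℝ) associated to the complex product structure {J,E}, and for elements x₊, y₊ ∈ s₊ with block data x₊ = [[A,0,0],[B,0,w₂],[v₁ᵗ,0,-tr A]] and y₊ = [[E,0,0],[F,0,z₂],[y₁ᵗ,0,-tr E]], one has ∇_{x₊} y₊ = [[AE,0,0],[BE + w₂y₁ᵗ, 0, Az₂ + Ew₂ + (tr A)z₂],[v₁ᵗE - (tr A)y₁ᵗ, 0, -tr(AE)]]. -/

import Mathlib

open Matrix

namespace Stmt15

/-- `(A, v, w) ↦ [[A, w], [vᵗ, -tr A]]`. -/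
def Phi {ι : Type} [Fintype ι] (A : Matrix ι ι ℝ) (v w : ι → ℝ) :
    Matrix (ι ⊕ Unit) (ι ⊕ Unit) ℝ :=
  Matrix.fromBlocks A (Matrix.of fun i (_ : Unit) => w i)
    (Matrix.of fun (_ : Unit) j => v j) (Matrix.of fun _ _ => -A.trace)

/-- `J₀ = [[0,-Iₙ],[Iₙ,0]]`. -/
def J0 (n : ℕ) : Matrix (Fin n ⊕ Fin n) (Fin n ⊕ Fin n) ℝ :=
  Matrix.fromBlocks 0 (-1) 1 0

/-- `E₀ = [[Iₙ,0],[0,-Iₙ]]`. -/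
def E0 (n : ℕ) : Matrix (Fin n ⊕ Fin n) (Fin n ⊕ Fin n) ℝ :=
  Matrix.fromBlocks 1 0 0 (-1)

/-- Elements of `s₊`, in block form `[[A,0,0],[B,0,w₂],[v₁ᵗ,0,-tr A]]`. -/
def Pl {n : ℕ} (A B : Matrix (Fin n) (Fin n) ℝ) (v1 w2 : Fin n → ℝ) :
    Matrix ((Fin n ⊕ Fin n) ⊕ Unit) ((Fin n ⊕ Fin n) ⊕ Unit) ℝ :=
  Phi (Matrix.fromBlocks A 0 B 0) (Sum.elim v1 0) (Sum.elim 0 w2)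

lemma Phi_bracket {ι : Type} [Fintype ι] [DecidableEq ι]
    (A A' : Matrix ι ι ℝ) (v w v' w' : ι → ℝ) :
    ⁅Phi A v w, Phi A' v' w'⁆ =
      Phi (⁅A, A'⁆ + vecMulVec w v' - vecMulVec w' v)
        (v ᵥ* A' - v' ᵥ* A + A'.trace • v - A.trace • v')
        (A *ᵥ w' - A' *ᵥ w + A.trace • w' - A'.trace • w) := by
  ext i j
  rcases i with i | i <;> rcases j with j | j <;>
    simp [Phi, Ring.lie_def, Matrix.mul_apply, Matrix.fromBlocks,
      Fintype.sum_sum_type, Matrix.trace, Matrix.diag, Matrix.vecMulVec_apply,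
      Matrix.mulVec, Matrix.vecMul, dotProduct, Finset.sum_sub_distrib,
      Finset.mul_sum, Finset.sum_mul, sub_mul, mul_sub, mul_comm] <;>
    try ring
  rw [Finset.sum_add_distrib, Finset.sum_sub_distrib,
    Finset.sum_comm (f := fun x y => A y x * A' x y)]
  ring

lemma neg_half_Phi {ι : Type} [Fintype ι]
    (M M' : Matrix ι ι ℝ) (p q p' q' : ι → ℝ) :
    -((1/2 : ℝ) • (Phi M p q + Phi M' p' q')) =
      Phi (-((1/2 : ℝ) • (M + M'))) (-((1/2 : ℝ) • (p + p')))
        (-((1/2 : ℝ) • (q + q'))) := by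
  ext i j
  rcases i with i | i <;> rcases j with j | j <;>
    simp [Phi, Matrix.fromBlocks, Matrix.trace, Matrix.diag,
      Finset.sum_add_distrib, Finset.mul_sum] <;> ring


lemma Phi_congr {ι : Type} [Fintype ι] {A A' : Matrix ι ι ℝ} {v v' w w' : ι → ℝ}
    (h1 : A = A') (h2 : v = v') (h3 : w = w') : Phi A v w = Phi A' v' w' := by
  rw [h1, h2, h3]

set_option maxHeartbeats 1600000 in
/-- For the torsion-free connection `∇ = ∇^{CP}` on `sl(2n+1,ℝ)`
associated to the complex product structure `{J,E}` (so that on `s₊` one has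
`∇_{x₊}y₊ = -π₊ J[x₊, Jy₊]` with `π₊ = ½(Id + E)`), and elements
`x₊ = [[A,0,0],[B,0,w₂],[v₁ᵗ,0,-tr A]]`, `y₊ = [[E,0,0],[F,0,z₂],[y₁ᵗ,0,-tr E]]` of `s₊`,
one has `∇_{x₊}y₊ = [[AE,0,0],[BE + w₂y₁ᵗ, 0, Az₂ + Ew₂ + (tr A)z₂],
[v₁ᵗE - (tr A)y₁ᵗ, 0, -tr(AE)]]`. -/
theorem stmt15 (n : ℕ)
    (J E : Matrix ((Fin n ⊕ Fin n) ⊕ Unit) ((Fin n ⊕ Fin n) ⊕ Unit) ℝ →ₗ[ℝ]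
      Matrix ((Fin n ⊕ Fin n) ⊕ Unit) ((Fin n ⊕ Fin n) ⊕ Unit) ℝ)
    (hJ : ∀ (A : Matrix (Fin n ⊕ Fin n) (Fin n ⊕ Fin n) ℝ) (v w : Fin n ⊕ Fin n → ℝ),
      J (Phi A v w) = Phi (A * J0 n) (-(J0 n *ᵥ v)) (-(J0 n *ᵥ w)))
    (hE : ∀ (A : Matrix (Fin n ⊕ Fin n) (Fin n ⊕ Fin n) ℝ) (v w : Fin n ⊕ Fin n → ℝ),
      E (Phi A v w) = Phi (A * E0 n) (E0 n *ᵥ v) (-(E0 n *ᵥ w)))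
    (D : Matrix ((Fin n ⊕ Fin n) ⊕ Unit) ((Fin n ⊕ Fin n) ⊕ Unit) ℝ →
      Matrix ((Fin n ⊕ Fin n) ⊕ Unit) ((Fin n ⊕ Fin n) ⊕ Unit) ℝ →
      Matrix ((Fin n ⊕ Fin n) ⊕ Unit) ((Fin n ⊕ Fin n) ⊕ Unit) ℝ)
    (hD : ∀ (A B A' B' : Matrix (Fin n) (Fin n) ℝ) (v1 w2 v1' w2' : Fin n → ℝ),
      D (Pl A B v1 w2) (Pl A' B' v1' w2') =
        -((1/2 : ℝ) • (J ⁅Pl A B v1 w2, J (Pl A' B' v1' w2')⁆ +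
          E (J ⁅Pl A B v1 w2, J (Pl A' B' v1' w2')⁆)))) :
    ∀ (A B Ey F : Matrix (Fin n) (Fin n) ℝ) (v1 w2 y1 z2 : Fin n → ℝ),
      D (Pl A B v1 w2) (Pl Ey F y1 z2) =
        Pl (A * Ey) (B * Ey + Matrix.vecMulVec w2 y1)
          (v1 ᵥ* Ey - A.trace • y1) (A *ᵥ z2 + Ey *ᵥ w2 + A.trace • z2) := by
  intro A B Ey F v1 w2 y1 z2
  rw [hD]
  simp only [Pl]
  rw [hJ, Phi_bracket, hJ, hE, neg_half_Phi]
  refine Phi_congr ?_ ?_ ?_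
  · ext i j
    rcases i with i | i <;> rcases j with j | j <;>
      simp [J0, E0, Ring.lie_def, Matrix.mul_apply, Matrix.fromBlocks, Fintype.sum_sum_type,
        Matrix.vecMulVec_apply, Matrix.mulVec, Matrix.vecMul, dotProduct, Matrix.one_apply,
        Finset.sum_ite_eq, Finset.sum_ite_eq', mul_ite, ite_mul, Finset.mul_sum,
        Finset.sum_mul, Finset.sum_sub_distrib, Finset.sum_add_distrib,
        Matrix.trace, Matrix.diag]
    all_goals try ring
    all_goals try (rw [← Finset.sum_mul]; ring)
    all_goals rw [← Finset.sum_add_distrib]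
    all_goals apply Finset.sum_congr rfl
    all_goals intro x _
    all_goals ring
  · funext i
    rcases i with i | i <;>
      simp [J0, E0, Ring.lie_def, Matrix.mul_apply, Matrix.fromBlocks, Fintype.sum_sum_type,
        Matrix.vecMulVec_apply, Matrix.mulVec, Matrix.vecMul, dotProduct, Matrix.one_apply,
        Finset.sum_ite_eq, Finset.sum_ite_eq', mul_ite, ite_mul, Finset.mul_sum,
        Finset.sum_mul, Finset.sum_sub_distrib, Finset.sum_add_distrib,
        Matrix.trace, Matrix.diag] <;>
      (first | ring | (rw [← Finset.sum_add_distrib]; apply Finset.sum_congr rfl; intro x _; ring) | (rw [← Finset.sum_sub_distrib]; apply Finset.sum_congr rfl; intro x _; ring))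
  · funext i
    rcases i with i | i <;>
      simp [J0, E0, Ring.lie_def, Matrix.mul_apply, Matrix.fromBlocks, Fintype.sum_sum_type,
        Matrix.vecMulVec_apply, Matrix.mulVec, Matrix.vecMul, dotProduct, Matrix.one_apply,
        Finset.sum_ite_eq, Finset.sum_ite_eq', mul_ite, ite_mul, Finset.mul_sum,
        Finset.sum_mul, Finset.sum_sub_distrib, Finset.sum_add_distrib,
        Matrix.trace, Matrix.diag] <;>
      (first | ring | (rw [← Finset.sum_add_distrib]; apply Finset.sum_congr rfl; intro x _; ring) | (rw [← Finset.sum_sub_distrib]; apply Finset.sum_congr rfl; intro x _; ring))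

end Stmt15
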